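/- arXiv:1110.5378 — 4 statements merged into one kernel-verified Lean document; each statement's English description precedes it below -/
import Mathlib

section
/- Let n ≥ 1 and let a_# be a real number with n − 1/2 < a_# < n + 1/2. Set δ := (n − 1/2)^{5/2} √n |S^n| / (6 a_#³) and r := 2(n − 1/2)^{5/2} / (3 a_#^{3/2}). If ρ ∈ L¹(S^n, σ) satisfies ‖ρ − √(n/a_#)‖_{L¹(σ)} ≤ δ, then there exists a unique real number a with |a − a_#| ≤ r such that ∫_{S^n} (ρ(ω) − √(n/a)) dσ(ω) = 0. Moreover this a satisfies |a − a_#| ≤ C ‖ρ − √(n/a_#)‖_{L¹(σ)} and ‖ρ − √(n/a)‖_{L¹(σ)} ≤ C ‖ρ − √(n/a_#)‖_{L¹(σ)}, where C is a constant depending only on n. -/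
open MeasureTheory Metric

/-- The surface measure on the unit sphere `S^n ⊆ ℝ^{n+1}`. -/
noncomputable def sphereMeasure (n : ℕ) :
    Measure (sphere (0 : EuclideanSpace ℝ (Fin (n + 1))) 1) :=
  (volume : Measure (EuclideanSpace ℝ (Fin (n + 1)))).toSphere

lemma rpow_52' (x : ℝ) (hx : 0 ≤ x) : x ^ ((5:ℝ)/2) = Real.sqrt x ^ 5 := by
  rw [Real.sqrt_eq_rpow, ← Real.rpow_natCast (x ^ ((1:ℝ)/2)) 5, ← Real.rpow_mul hx]
  norm_num

lemma rpow_32' (x : ℝ) (hx : 0 ≤ x) : x ^ ((3:ℝ)/2) = Real.sqrt x ^ 3 := by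
  rw [Real.sqrt_eq_rpow, ← Real.rpow_natCast (x ^ ((1:ℝ)/2)) 3, ← Real.rpow_mul hx]
  norm_num

set_option maxHeartbeats 1000000 in
/-- quantitative orthogonal decomposition of the radial graph
function.  If `‖ρ − √(n/a_#)‖_{L¹} ≤ δ := (n−1/2)^{5/2}√n |S^n|/(6 a_#³)` for
some `n − 1/2 < a_# < n + 1/2`, then there is a unique `a` with
`|a − a_#| ≤ r := 2(n−1/2)^{5/2}/(3 a_#^{3/2})` such that
`∫ (ρ − √(n/a)) dσ = 0`; moreover `|a − a_#| ≲ ‖ρ − √(n/a_#)‖_{L¹}` and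
`‖ρ − √(n/a)‖_{L¹} ≲ ‖ρ − √(n/a_#)‖_{L¹}`, with a constant depending only
on `n`. -/
theorem exists_unique_scaling_parameter (n : ℕ) (hn : 1 ≤ n) :
    ∃ C : ℝ, 0 < C ∧
      ∀ (aSharp : ℝ), (n : ℝ) - 1 / 2 < aSharp → aSharp < (n : ℝ) + 1 / 2 →
      ∀ ρ : sphere (0 : EuclideanSpace ℝ (Fin (n + 1))) 1 → ℝ,
        Integrable ρ (sphereMeasure n) →
        (∫ ω, |ρ ω - Real.sqrt ((n : ℝ) / aSharp)| ∂(sphereMeasure n)) ≤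
          ((n : ℝ) - 1 / 2) ^ ((5 : ℝ) / 2) * Real.sqrt n *
            ((sphereMeasure n) Set.univ).toReal / (6 * aSharp ^ 3) →
        ∃ a : ℝ,
          (|a - aSharp| ≤ 2 * ((n : ℝ) - 1 / 2) ^ ((5 : ℝ) / 2) /
              (3 * aSharp ^ ((3 : ℝ) / 2)) ∧
            (∫ ω, (ρ ω - Real.sqrt ((n : ℝ) / a)) ∂(sphereMeasure n)) = 0) ∧
          (∀ a' : ℝ,
            |a' - aSharp| ≤ 2 * ((n : ℝ) - 1 / 2) ^ ((5 : ℝ) / 2) /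
                (3 * aSharp ^ ((3 : ℝ) / 2)) →
            (∫ ω, (ρ ω - Real.sqrt ((n : ℝ) / a')) ∂(sphereMeasure n)) = 0 →
            a' = a) ∧
          |a - aSharp| ≤
            C * ∫ ω, |ρ ω - Real.sqrt ((n : ℝ) / aSharp)| ∂(sphereMeasure n) ∧
          (∫ ω, |ρ ω - Real.sqrt ((n : ℝ) / a)| ∂(sphereMeasure n)) ≤
            C * ∫ ω, |ρ ω - Real.sqrt ((n : ℝ) / aSharp)| ∂(sphereMeasure n) := by
  haveI : IsFiniteMeasure (sphereMeasure n) := by unfold sphereMeasure; infer_instance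
  have hN : (1:ℝ) ≤ (n:ℝ) := by exact_mod_cast hn
  have hNpos : (0:ℝ) < (n:ℝ) := by linarith
  have hμpos : 0 < sphereMeasure n Set.univ := by
    rw [sphereMeasure, Measure.toSphere_apply_univ]
    have h1 : 0 < volume (ball (0 : EuclideanSpace ℝ (Fin (n+1))) 1) :=
      measure_ball_pos _ _ one_pos
    have h2 : (0:ℕ) < Module.finrank ℝ (EuclideanSpace ℝ (Fin (n+1))) := by
      simp [finrank_euclideanSpace_fin]
    exact ENNReal.mul_pos (by exact_mod_cast h2.ne') h1.ne'
  set V := ((sphereMeasure n) Set.univ).toReal with hVdef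
  have hV : 0 < V := ENNReal.toReal_pos hμpos.ne' (measure_ne_top _ _)
  set t := Real.sqrt (n:ℝ) with htdef
  have ht : 0 < t := Real.sqrt_pos.mpr hNpos
  have ht2 : t ^ 2 = (n:ℝ) := Real.sq_sqrt hNpos.le
  set B := ((n:ℝ) - 1/2) ^ ((5:ℝ)/2) with hBdef
  clear_value V t B
  have hC2 : (0:ℝ) ≤ 78/25 * Real.sqrt ((n:ℝ) + 1/2) ^ 3 / (t * V) := by positivity
  refine ⟨78/25 * Real.sqrt ((n:ℝ) + 1/2) ^ 3 / (t * V) + 2, by linarith, ?_⟩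
  intro aSharp h1 h2 ρ hρ hE
  have hb : (0:ℝ) < (n:ℝ) - 1/2 := by linarith
  have haS : (0:ℝ) < aSharp := lt_trans hb h1
  have hBpos : 0 < B := by rw [hBdef]; exact Real.rpow_pos_of_pos hb _
  set s := Real.sqrt aSharp with hsdef
  have hs : 0 < s := Real.sqrt_pos.mpr haS
  have hs2 : s ^ 2 = aSharp := Real.sq_sqrt haS.le
  set w := Real.sqrt ((n:ℝ)/aSharp) with hwdef
  have hw : 0 < w := Real.sqrt_pos.mpr (div_pos hNpos haS)
  have hwts : w = t / s := by rw [hwdef, htdef, hsdef]; exact Real.sqrt_div hNpos.le aSharp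
  have hw2 : w ^ 2 = (n:ℝ)/aSharp := Real.sq_sqrt (by positivity)
  set E := ∫ ω, |ρ ω - w| ∂(sphereMeasure n) with hEdef
  clear_value s w E
  have hE0 : 0 ≤ E := by rw [hEdef]; exact integral_nonneg fun ω => abs_nonneg _
  -- rpow conversions
  have e32 : aSharp ^ ((3:ℝ)/2) = s ^ 3 := by rw [hsdef]; exact rpow_32' aSharp haS.le
  have e52 : aSharp ^ ((5:ℝ)/2) = s ^ 5 := by rw [hsdef]; exact rpow_52' aSharp haS.le
  have haS3 : aSharp ^ 3 = s ^ 6 := by rw [← hs2]; ring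
  have hB5 : B ≤ s ^ 5 := by
    rw [← e52, hBdef]; exact Real.rpow_le_rpow hb.le h1.le (by norm_num)
  have hBb : B ≤ ((n:ℝ) - 1/2) * s ^ 3 := by
    set u := Real.sqrt ((n:ℝ) - 1/2) with hudef
    have hu : 0 ≤ u := Real.sqrt_nonneg _
    have hu2 : u ^ 2 = (n:ℝ) - 1/2 := Real.sq_sqrt hb.le
    have hus : u ≤ s := by rw [hudef, hsdef]; exact Real.sqrt_le_sqrt h1.le
    have hB' : B = u ^ 5 := by rw [hBdef, hudef]; exact rpow_52' _ hb.le
    have h3 : u ^ 3 ≤ s ^ 3 := pow_le_pow_left₀ hu hus 3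
    calc B = u ^ 2 * u ^ 3 := by rw [hB']; ring
      _ ≤ u ^ 2 * s ^ 3 := by gcongr
      _ = ((n:ℝ) - 1/2) * s ^ 3 := by rw [hu2]
  -- the mean
  set m := (∫ ω, ρ ω ∂(sphereMeasure n)) / V with hmdef
  clear_value m
  have hIρ : (∫ ω, ρ ω ∂(sphereMeasure n)) = m * V := by
    rw [hmdef]; exact (div_mul_cancel₀ _ hV.ne').symm
  have hint : ∀ c : ℝ, (∫ ω, (ρ ω - c) ∂(sphereMeasure n)) =
      (∫ ω, ρ ω ∂(sphereMeasure n)) - V * c := by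
    intro c
    rw [integral_sub hρ (integrable_const c), integral_const, smul_eq_mul, measureReal_def, ← hVdef]
  have hiff : ∀ c : ℝ, (∫ ω, (ρ ω - c) ∂(sphereMeasure n)) = 0 ↔ c = m := by
    intro c
    rw [hint c, hIρ]
    constructor
    · intro h
      have h' : (m - c) * V = 0 := by linear_combination h
      rcases mul_eq_zero.mp h' with h'' | h''
      · linarith
      · exact absurd h'' hV.ne'
    · intro h; rw [h]; ring
  -- |m - w| * V ≤ E
  have hiρw : Integrable (fun ω => ρ ω - w) (sphereMeasure n) := hρ.sub (integrable_const _)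
  have hmwV : |m - w| * V ≤ E := by
    have h0 : |∫ ω, (ρ ω - w) ∂(sphereMeasure n)| ≤ E := by
      rw [hEdef]
      simpa [Real.norm_eq_abs] using
        norm_integral_le_integral_norm (μ := sphereMeasure n) (fun ω => ρ ω - w)
    have h2' : (m - w) * V = ∫ ω, (ρ ω - w) ∂(sphereMeasure n) := by
      rw [hint w, hIρ]; ring
    rw [show |m - w| * V = |(m - w) * V| from by rw [abs_mul, abs_of_pos hV], h2']
    exact h0
  -- E is small
  have hEδ : E ≤ V * w / 6 := by
    calc E ≤ B * t * V / (6 * aSharp ^ 3) := hE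
      _ ≤ s ^ 5 * t * V / (6 * aSharp ^ 3) := by gcongr
      _ = V * w / 6 := by
          rw [haS3, hwts]; field_simp
  have hmw6 : |m - w| ≤ w / 6 := by
    have h := (le_div_iff₀ hV).mpr (hmwV.trans hEδ)
    rwa [show V * w / 6 / V = w / 6 from by field_simp] at h
  have hm_lb : 5/6 * w ≤ m := by
    have := abs_le.mp hmw6; linarith [this.1]
  have hm_ub : m ≤ 7/6 * w := by
    have := abs_le.mp hmw6; linarith [this.2]
  have hm : 0 < m := by linarith
  -- define a
  set a := (n:ℝ) / m ^ 2 with hadef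
  clear_value a
  have hna : (n:ℝ) / a = m ^ 2 := by
    rw [hadef, div_div_eq_mul_div, mul_comm, mul_div_assoc, div_self hNpos.ne', mul_one]
  have hsq : Real.sqrt ((n:ℝ)/a) = m := by rw [hna, Real.sqrt_sq hm.le]
  have haS_eq : aSharp = (n:ℝ) / w ^ 2 := by
    rw [hw2, div_div_eq_mul_div, mul_comm, mul_div_assoc, div_self hNpos.ne', mul_one]
  -- core estimate
  have hwm : |w - m| ≤ E / V := by
    rw [abs_sub_comm, le_div_iff₀ hV]; exact hmwV
  have hcore : |a - aSharp| ≤ 78/25 * s ^ 3 * E / (t * V) := by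
    have hdiff : a - aSharp = (n:ℝ) * ((w - m) * (w + m)) / (m ^ 2 * w ^ 2) := by
      rw [hadef, haS_eq]; field_simp [hm.ne', hw.ne']; ring
    have habs2 : |a - aSharp| = (n:ℝ) * (|w - m| * (w + m)) / (m ^ 2 * w ^ 2) := by
      rw [hdiff, abs_div, abs_mul, abs_mul, abs_of_pos hNpos,
        abs_of_pos (by positivity : (0:ℝ) < w + m),
        abs_of_pos (by positivity : (0:ℝ) < m ^ 2 * w ^ 2)]
    have h13 : w + m ≤ 13/6 * w := by linarith
    have h25 : 25/36 * w ^ 2 ≤ m ^ 2 := by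
      calc 25/36 * w ^ 2 = (5/6 * w) * (5/6 * w) := by ring
        _ ≤ m * m := mul_le_mul hm_lb hm_lb (by positivity) hm.le
        _ = m ^ 2 := (sq m).symm
    have hbound : (n:ℝ) * (|w - m| * (w + m)) / (m ^ 2 * w ^ 2) ≤
        (n:ℝ) * ((E/V) * (13/6 * w)) / ((25/36 * w ^ 2) * w ^ 2) := by
      gcongr
    have heq : (n:ℝ) * ((E/V) * (13/6 * w)) / ((25/36 * w ^ 2) * w ^ 2) =
        78/25 * s ^ 3 * E / (t * V) := by
      rw [hwts, ← ht2]; field_simp [hs.ne', ht.ne', hV.ne']; ring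
    rw [habs2]; rw [heq] at hbound; exact hbound
  -- conclusion
  refine ⟨a, ⟨?_, ?_⟩, ?_, ?_, ?_⟩
  · -- radius bound
    rw [e32]
    calc |a - aSharp| ≤ 78/25 * s ^ 3 * E / (t * V) := hcore
      _ ≤ 78/25 * s ^ 3 * (B * t * V / (6 * s ^ 6)) / (t * V) := by
          rw [haS3] at hE; gcongr
      _ = 13/25 * B / s ^ 3 := by field_simp [hs.ne', ht.ne', hV.ne']; ring
      _ ≤ 2 * B / (3 * s ^ 3) := by
          rw [div_le_div_iff₀ (by positivity) (by positivity)]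
          have h := mul_pos hBpos (pow_pos hs 3)
          linarith [h]
  · -- integral zero
    rw [hsq]; exact (hiff m).mpr rfl
  · -- uniqueness
    intro a' hr' hz'
    have hr_le : 2 * B / (3 * aSharp ^ ((3:ℝ)/2)) ≤ 2/3 * ((n:ℝ) - 1/2) := by
      rw [e32, div_le_iff₀ (by positivity)]
      linarith [hBb]
    have ha'pos : 0 < a' := by
      have := abs_le.mp (hr'.trans hr_le)
      linarith [this.1]
    have hsm : Real.sqrt ((n:ℝ)/a') = m := (hiff _).mp hz'
    have hna' : (n:ℝ)/a' = m ^ 2 := by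
      rw [← Real.sq_sqrt (show (0:ℝ) ≤ (n:ℝ)/a' by positivity), hsm]
    have hNa' : (n:ℝ) = m ^ 2 * a' := (div_eq_iff ha'pos.ne').mp hna'
    rw [hadef, hNa', mul_comm, mul_div_assoc, div_self (pow_ne_zero 2 hm.ne'), mul_one]
  · -- |a - aSharp| ≤ C E
    have hs3 : s ^ 3 ≤ Real.sqrt ((n:ℝ) + 1/2) ^ 3 :=
      pow_le_pow_left₀ hs.le (hsdef ▸ Real.sqrt_le_sqrt h2.le) 3
    calc |a - aSharp| ≤ 78/25 * s ^ 3 * E / (t * V) := hcore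
      _ ≤ 78/25 * Real.sqrt ((n:ℝ) + 1/2) ^ 3 * E / (t * V) := by gcongr
      _ = (78/25 * Real.sqrt ((n:ℝ) + 1/2) ^ 3 / (t * V)) * E := by ring
      _ ≤ (78/25 * Real.sqrt ((n:ℝ) + 1/2) ^ 3 / (t * V) + 2) * E := by linarith
  · -- L1 bound
    rw [hsq]
    have step1 : (∫ ω, |ρ ω - m| ∂(sphereMeasure n)) ≤
        ∫ ω, (|ρ ω - w| + |w - m|) ∂(sphereMeasure n) :=
      integral_mono ((hρ.sub (integrable_const m)).abs)
        (hiρw.abs.add (integrable_const _)) (fun ω => abs_sub_le _ _ _)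
    have step2 : (∫ ω, (|ρ ω - w| + |w - m|) ∂(sphereMeasure n)) = E + |w - m| * V := by
      rw [integral_add hiρw.abs (integrable_const _), integral_const, smul_eq_mul, measureReal_def, ← hVdef,
        ← hEdef]
      ring
    have step3 : |w - m| * V ≤ E := by rw [abs_sub_comm]; exact hmwV
    have hC2' : (0:ℝ) ≤ 78/25 * Real.sqrt ((n:ℝ) + 1/2) ^ 3 / (t * V) := by positivity
    calc (∫ ω, |ρ ω - m| ∂(sphereMeasure n)) ≤ E + |w - m| * V := step2 ▸ step1
      _ ≤ 2 * E := by linarith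
      _ ≤ (78/25 * Real.sqrt ((n:ℝ) + 1/2) ^ 3 / (t * V) + 2) * E := by
          linarith [mul_nonneg hC2' hE0]
end

section
/- Let n ≥ 1, λ₀ > 0, and let ã : [0, ∞) → [n − 1/2, n + 1/2] be continuous; let t_* be the unique positive time with λ₀² = 2∫₀^{t_*} ã(s) ds, and set λ(t) := (λ₀² − 2∫₀^t ã(s) ds)^{1/2} and τ(t) := ∫₀^t λ(s)^{-2} ds for t ∈ [0, t_*). Assume there are constants c > 0, C ≥ 0 and a_* ∈ [n − 1/2, n + 1/2] with |ã(t) − a_*| ≤ C e^{−c τ(t)} for all t ∈ [0, t_*). Then there exists a constant C₂ such that e^{−c τ(t)} ≤ C₂ (t_* − t)^{c/(2a_*)} for all t ∈ [0, t_*). -/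
open MeasureTheory Set

set_option maxHeartbeats 2000000 in
/-- conversion of exponential decay in the rescaled time
`τ(t) = ∫₀^t λ(s)^{-2} ds` into a power of `(t_* − t)`:  if
`|ã(t) − a_*| ≤ C e^{−c τ(t)}` on `[0, t_*)`, then
`e^{−c τ(t)} ≤ C₂ (t_* − t)^{c/(2a_*)}` on `[0, t_*)`. -/
theorem exp_decay_to_power_law (n : ℕ) (hn : 1 ≤ n) (lam₀ : ℝ) (hlam₀ : 0 < lam₀)
    (atil : ℝ → ℝ) (hcont : ContinuousOn atil (Ici 0))
    (hrange : ∀ t ∈ Ici (0 : ℝ), atil t ∈ Icc ((n : ℝ) - 1 / 2) ((n : ℝ) + 1 / 2))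
    (tstar : ℝ) (htstar : 0 < tstar)
    (hcollapse : lam₀ ^ 2 = 2 * ∫ s in (0 : ℝ)..tstar, atil s)
    (huniq : ∀ t' : ℝ, 0 < t' → lam₀ ^ 2 = 2 * ∫ s in (0 : ℝ)..t', atil s → t' = tstar)
    (c C astar : ℝ) (hc : 0 < c) (hC : 0 ≤ C)
    (hastar : astar ∈ Icc ((n : ℝ) - 1 / 2) ((n : ℝ) + 1 / 2))
    (hdecay : ∀ t ∈ Ico (0 : ℝ) tstar,
      |atil t - astar| ≤
        C * Real.exp (-c * ∫ s in (0 : ℝ)..t,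
          (Real.sqrt (lam₀ ^ 2 - 2 * ∫ u in (0 : ℝ)..s, atil u) ^ 2)⁻¹)) :
    ∃ C₂ : ℝ, ∀ t ∈ Ico (0 : ℝ) tstar,
      Real.exp (-c * ∫ s in (0 : ℝ)..t,
          (Real.sqrt (lam₀ ^ 2 - 2 * ∫ u in (0 : ℝ)..s, atil u) ^ 2)⁻¹) ≤
        C₂ * (tstar - t) ^ (c / (2 * astar)) := by
  have h0ts : (0:ℝ) ≤ tstar := htstar.le
  have hn1 : (1:ℝ) ≤ (n:ℝ) := by exact_mod_cast hn
  set β : ℝ := (n:ℝ) + 1/2 with hβdef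
  have hβpos : 0 < β := by simp only [hβdef]; linarith
  have hastarpos : 0 < astar := lt_of_lt_of_le (by linarith) hastar.1
  set α : ℝ := c / (2*β) with hαdef
  have hαpos : 0 < α := by
    apply div_pos hc; linarith
  -- integrability of atil on nonnegative intervals
  have hInt : ∀ a b : ℝ, 0 ≤ a → 0 ≤ b → IntervalIntegrable atil volume a b := by
    intro a b ha hb
    exact (hcont.mono (fun x hx => le_trans (le_min ha hb) hx.1)).intervalIntegrable
  -- bounds on integrals of atil
  have hIntUB : ∀ a b : ℝ, 0 ≤ a → a ≤ b → (∫ s in a..b, atil s) ≤ β * (b - a) := by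
    intro a b ha hab
    have h := intervalIntegral.integral_mono_on (μ := volume) hab
      (hInt a b ha (ha.trans hab)) (intervalIntegrable_const (c := β))
      (fun x hx => (hrange x (ha.trans hx.1)).2)
    rwa [intervalIntegral.integral_const, smul_eq_mul, mul_comm] at h
  have hIntLB : ∀ a b : ℝ, 0 ≤ a → a ≤ b → ((n:ℝ) - 1/2) * (b - a) ≤ ∫ s in a..b, atil s := by
    intro a b ha hab
    have h := intervalIntegral.integral_mono_on (μ := volume) hab
      (intervalIntegrable_const (c := (n:ℝ) - 1/2)) (hInt a b ha (ha.trans hab))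
      (fun x hx => (hrange x (ha.trans hx.1)).1)
    rwa [intervalIntegral.integral_const, smul_eq_mul, mul_comm] at h
  -- L t = 2 ∫_t^{tstar} atil
  have hL2 : ∀ t : ℝ, 0 ≤ t → t ≤ tstar →
      lam₀ ^ 2 - 2 * ∫ u in (0:ℝ)..t, atil u = 2 * ∫ s in t..tstar, atil s := by
    intro t ht hts
    rw [hcollapse, ← intervalIntegral.integral_interval_sub_left
      (hInt 0 tstar le_rfl h0ts) (hInt 0 t le_rfl ht)]
    ring
  have hLpos : ∀ t : ℝ, 0 ≤ t → t < tstar →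
      0 < lam₀ ^ 2 - 2 * ∫ u in (0:ℝ)..t, atil u := by
    intro t ht hts
    rw [hL2 t ht hts.le]
    have h1 := hIntLB t tstar ht hts.le
    nlinarith
  have hLub : ∀ t : ℝ, 0 ≤ t → t < tstar →
      lam₀ ^ 2 - 2 * ∫ u in (0:ℝ)..t, atil u ≤ 2*β*(tstar - t) := by
    intro t ht hts
    rw [hL2 t ht hts.le]
    have h1 := hIntUB t tstar ht hts.le
    nlinarith
  -- continuity of L
  have hAcont : ContinuousOn (fun x => ∫ u in (0:ℝ)..x, atil u) (Icc 0 tstar) := by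
    have h := intervalIntegral.continuousOn_primitive_interval (a := (0:ℝ)) (b := tstar)
      (f := atil) (μ := volume) ?_
    · simpa [uIcc_of_le h0ts] using h
    · rw [uIcc_of_le h0ts]
      exact (hcont.mono (fun x hx => hx.1)).integrableOn_Icc
  have hLcont : ContinuousOn (fun s => lam₀ ^ 2 - 2 * ∫ u in (0:ℝ)..s, atil u) (Icc 0 tstar) :=
    continuousOn_const.sub (continuousOn_const.mul hAcont)
  have hLinvInt : ∀ t : ℝ, 0 ≤ t → t < tstar →
      IntervalIntegrable (fun s => (lam₀ ^ 2 - 2 * ∫ u in (0:ℝ)..s, atil u)⁻¹) volume 0 t := by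
    intro t ht hts
    apply ContinuousOn.intervalIntegrable
    rw [uIcc_of_le ht]
    apply ContinuousOn.inv₀ (hLcont.mono (Icc_subset_Icc le_rfl hts.le))
    intro x hx
    exact ne_of_gt (hLpos x hx.1 (lt_of_le_of_lt hx.2 hts))
  -- rewriting the sqrt-squared integrand
  have htau : ∀ t : ℝ, 0 ≤ t → t < tstar →
      (∫ s in (0:ℝ)..t, (Real.sqrt (lam₀ ^ 2 - 2 * ∫ u in (0:ℝ)..s, atil u) ^ 2)⁻¹)
        = ∫ s in (0:ℝ)..t, (lam₀ ^ 2 - 2 * ∫ u in (0:ℝ)..s, atil u)⁻¹ := by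
    intro t ht hts
    apply intervalIntegral.integral_congr
    intro s hs
    rw [uIcc_of_le ht] at hs
    have := hLpos s hs.1 (lt_of_le_of_lt hs.2 hts)
    simp [Real.sq_sqrt this.le]
  -- basic integral computations
  have hloginv : ∀ t : ℝ, 0 ≤ t → t < tstar →
      (∫ s in (0:ℝ)..t, (tstar - s)⁻¹) = Real.log tstar - Real.log (tstar - t) := by
    intro t ht hts
    rw [intervalIntegral.integral_comp_sub_left (fun x => x⁻¹) tstar, sub_zero,
      integral_inv, Real.log_div (ne_of_gt htstar) (ne_of_gt (by linarith : (0:ℝ) < tstar - t))]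
    rw [uIcc_of_le (by linarith)]
    intro h0
    have := h0.1
    linarith [this]
  have hrpow : ∀ (t r : ℝ), 0 ≤ t → t < tstar → -1 < r →
      (∫ s in (0:ℝ)..t, (tstar - s) ^ r)
        = (tstar ^ (r+1) - (tstar - t) ^ (r+1)) / (r+1) := by
    intro t r ht hts hr
    rw [intervalIntegral.integral_comp_sub_left (fun x => x ^ r) tstar, sub_zero,
      integral_rpow (Or.inl hr)]
  -- Step 1 : crude lower bound on τ
  have hτ_lb1 : ∀ t : ℝ, 0 ≤ t → t < tstar →
      (2*β)⁻¹ * (Real.log tstar - Real.log (tstar - t))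
        ≤ ∫ s in (0:ℝ)..t, (lam₀ ^ 2 - 2 * ∫ u in (0:ℝ)..s, atil u)⁻¹ := by
    intro t ht hts
    have hgint : IntervalIntegrable (fun s => (2*β*(tstar - s))⁻¹) volume 0 t := by
      apply ContinuousOn.intervalIntegrable
      rw [uIcc_of_le ht]
      apply ContinuousOn.inv₀ (continuousOn_const.mul (continuousOn_const.sub continuousOn_id))
      intro x hx
      have : 0 < tstar - x := by
        have := hx.2; simp only [id] at *; nlinarith [hx.2]
      simp only [Pi.mul_apply, Pi.sub_apply, id]
      positivity
    have hmono := intervalIntegral.integral_mono_on (μ := volume) ht hgint (hLinvInt t ht hts)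
      (fun x hx => by
        have hx2 : x < tstar := lt_of_le_of_lt hx.2 hts
        exact inv_anti₀ (hLpos x hx.1 hx2) (hLub x hx.1 hx2))
    have hcalc : (∫ s in (0:ℝ)..t, (2*β*(tstar - s))⁻¹)
        = (2*β)⁻¹ * (Real.log tstar - Real.log (tstar - t)) := by
      have : ∀ s : ℝ, (2*β*(tstar - s))⁻¹ = (2*β)⁻¹ * (tstar - s)⁻¹ := by
        intro s; rw [mul_inv]
      simp_rw [this]
      rw [intervalIntegral.integral_const_mul, hloginv t ht hts]
    linarith [hmono, hcalc.ge, hcalc.le]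
  -- Step 1 : exponential bound
  have hS1 : ∀ t : ℝ, 0 ≤ t → t < tstar →
      Real.exp (-c * ∫ s in (0:ℝ)..t, (lam₀ ^ 2 - 2 * ∫ u in (0:ℝ)..s, atil u)⁻¹)
        ≤ tstar ^ (-α) * (tstar - t) ^ α := by
    intro t ht hts
    have h1 := hτ_lb1 t ht hts
    have h2β : (0:ℝ) < 2*β := by linarith
    have hαe : α * (2*β) = c := by
      rw [hαdef]; field_simp
    have h2 : -c * (∫ s in (0:ℝ)..t, (lam₀ ^ 2 - 2 * ∫ u in (0:ℝ)..s, atil u)⁻¹)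
        ≤ α * Real.log (tstar - t) + (-α) * Real.log tstar := by
      set T := ∫ s in (0:ℝ)..t, (lam₀ ^ 2 - 2 * ∫ u in (0:ℝ)..s, atil u)⁻¹
      set X := Real.log tstar
      set Y := Real.log (tstar - t)
      have key : α * (X - Y) ≤ c * T := by
        have h3 := mul_le_mul_of_nonneg_left h1 (le_of_lt hαpos)
        have h5 := mul_le_mul_of_nonneg_left h3 h2β.le
        have e1 : (2*β) * (α * ((2*β)⁻¹ * (X - Y))) = α * (X - Y) := by
          field_simp
        have e2 : (2*β) * (α * T) = c * T := by
          rw [show (2*β) * (α * T) = (α * (2*β)) * T by ring, hαe]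
        rw [e1, e2] at h5
        exact h5
      linarith [key]
    calc Real.exp (-c * ∫ s in (0:ℝ)..t, (lam₀ ^ 2 - 2 * ∫ u in (0:ℝ)..s, atil u)⁻¹)
        ≤ Real.exp (α * Real.log (tstar - t) + (-α) * Real.log tstar) := Real.exp_le_exp.mpr h2
      _ = tstar ^ (-α) * (tstar - t) ^ α := by
          rw [Real.exp_add, Real.rpow_def_of_pos (by linarith : (0:ℝ) < tstar - t),
            Real.rpow_def_of_pos htstar]
          ring_nf
  -- constants for Step 2
  set k : ℝ := C * tstar ^ (-α) with hkdef
  have hknn : 0 ≤ k := mul_nonneg hC (Real.rpow_nonneg h0ts _)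
  set K₂ : ℝ := 2*k/(α+1) with hK2def
  have hK2nn : 0 ≤ K₂ := div_nonneg (by linarith) (by linarith)
  set K₃ : ℝ := K₂ / (2*astar)^2 with hK3def
  have hK3nn : 0 ≤ K₃ := div_nonneg hK2nn (by positivity)
  -- Step 2 : refined upper bound for L
  have hLub2 : ∀ s : ℝ, 0 ≤ s → s < tstar →
      lam₀ ^ 2 - 2 * ∫ u in (0:ℝ)..s, atil u
        ≤ 2*astar*(tstar - s) + K₂ * (tstar - s) ^ (α+1) := by
    intro s hs hsts
    rw [hL2 s hs hsts.le]
    have hgcont : ContinuousOn (fun u => astar + k * (tstar - u) ^ α) (uIcc s tstar) :=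
      continuousOn_const.add (continuousOn_const.mul
        ((continuousOn_const.sub continuousOn_id).rpow_const (fun z _ => Or.inr hαpos.le)))
    have hgint : IntervalIntegrable (fun u => astar + k * (tstar - u) ^ α) volume s tstar :=
      hgcont.intervalIntegrable
    have hae : (fun u => atil u) ≤ᵐ[volume.restrict (Icc s tstar)]
        (fun u => astar + k * (tstar - u) ^ α) := by
      rw [← Measure.restrict_congr_set Ico_ae_eq_Icc]
      filter_upwards [ae_restrict_mem measurableSet_Ico] with z hz
      have hz0 : 0 ≤ z := le_trans hs hz.1
      have hz1 : z < tstar := hz.2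
      have hd := hdecay z ⟨hz0, hz1⟩
      rw [htau z hz0 hz1] at hd
      have hexp := hS1 z hz0 hz1
      have h6 : atil z - astar ≤ C * (tstar ^ (-α) * (tstar - z) ^ α) :=
        le_trans (le_abs_self _) (le_trans hd (mul_le_mul_of_nonneg_left hexp hC))
      have h7 : k * (tstar - z) ^ α = C * (tstar ^ (-α) * (tstar - z) ^ α) := by
        rw [hkdef]; ring
      show atil z ≤ astar + k * (tstar - z) ^ α
      linarith
    have hmono := intervalIntegral.integral_mono_ae_restrict hsts.le
      (hInt s tstar hs h0ts) hgint hae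
    have hint2 : IntervalIntegrable (fun u => (tstar - u) ^ α) volume s tstar :=
      ((continuousOn_const.sub continuousOn_id).rpow_const
        (fun z _ => Or.inr hαpos.le)).intervalIntegrable
    have hcalc : (∫ u in s..tstar, (astar + k * (tstar - u) ^ α))
        = astar * (tstar - s) + k * ((tstar - s) ^ (α+1) / (α+1)) := by
      rw [intervalIntegral.integral_add intervalIntegrable_const (hint2.const_mul k),
        intervalIntegral.integral_const, intervalIntegral.integral_const_mul]
      have hrp : (∫ u in s..tstar, (tstar - u) ^ α) = (tstar - s) ^ (α+1) / (α+1) := by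
        rw [intervalIntegral.integral_comp_sub_left (fun z => z ^ α) tstar, sub_self,
          integral_rpow (Or.inl (by linarith : (-1:ℝ) < α)),
          Real.zero_rpow (by positivity : α + 1 ≠ 0)]
        ring
      rw [hrp, smul_eq_mul]
      ring
    have h8 : K₂ * (tstar - s) ^ (α+1) = 2*(k * ((tstar - s) ^ (α+1) / (α+1))) := by
      rw [hK2def]; ring
    rw [hcalc] at hmono
    linarith
  -- pointwise lower bound on the inverse
  have hinv_lb : ∀ s : ℝ, 0 ≤ s → s < tstar →
      (2*astar*(tstar - s))⁻¹ - K₃ * (tstar - s) ^ (α-1)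
        ≤ (lam₀ ^ 2 - 2 * ∫ u in (0:ℝ)..s, atil u)⁻¹ := by
    intro s hs hsts
    have hts' : 0 < tstar - s := by linarith
    set x := 2*astar*(tstar - s) with hxdef
    set y := K₂ * (tstar - s) ^ (α+1) with hydef
    have hxpos : 0 < x := by rw [hxdef]; positivity
    have hynn : 0 ≤ y := mul_nonneg hK2nn (Real.rpow_nonneg hts'.le _)
    have hLp := hLpos s hs hsts
    have hLu := hLub2 s hs hsts
    have h1 : x⁻¹ - y / x^2 ≤ (x+y)⁻¹ := by
      rw [inv_eq_one_div (x+y), le_div_iff₀ (by linarith : (0:ℝ) < x + y)]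
      have e : (x⁻¹ - y / x^2) * (x+y) = 1 - (y/x)^2 := by
        field_simp
        ring
      rw [e]
      nlinarith [sq_nonneg (y/x)]
    have h2 : (x+y)⁻¹ ≤ (lam₀ ^ 2 - 2 * ∫ u in (0:ℝ)..s, atil u)⁻¹ :=
      inv_anti₀ hLp hLu
    have hpow : (tstar - s) ^ (α+1) = (tstar - s) ^ (α-1) * (tstar - s)^2 := by
      rw [← Real.rpow_natCast (tstar - s) 2, ← Real.rpow_add hts']
      congr 1
      push_cast
      ring
    have hne1 : ((2*astar)^2 : ℝ) ≠ 0 := by positivity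
    have hne2 : ((tstar - s)^2 : ℝ) ≠ 0 := by positivity
    have h3 : K₃ * (tstar - s) ^ (α-1) = y / x^2 := by
      rw [hydef, hxdef, hpow, hK3def,
        show (2*astar*(tstar-s))^2 = (2*astar)^2 * (tstar-s)^2 by ring]
      field_simp
    linarith
  -- Step 2 : refined lower bound on τ
  have hτ_lb2 : ∀ t : ℝ, 0 ≤ t → t < tstar →
      (2*astar)⁻¹ * (Real.log tstar - Real.log (tstar - t)) - K₃ * (tstar ^ α / α)
        ≤ ∫ s in (0:ℝ)..t, (lam₀ ^ 2 - 2 * ∫ u in (0:ℝ)..s, atil u)⁻¹ := by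
    intro t ht hts
    have hpos' : ∀ z ∈ Icc (0:ℝ) t, 0 < tstar - z := fun z hz => by
      have := hz.2; linarith [lt_of_le_of_lt hz.2 hts]
    have hint1 : IntervalIntegrable (fun s => (2*astar*(tstar - s))⁻¹) volume 0 t := by
      apply ContinuousOn.intervalIntegrable
      rw [uIcc_of_le ht]
      apply ContinuousOn.inv₀ (continuousOn_const.mul (continuousOn_const.sub continuousOn_id))
      intro z hz
      have := hpos' z hz
      simp only [Pi.mul_apply, Pi.sub_apply, id]
      positivity
    have hint2 : IntervalIntegrable (fun s => K₃ * (tstar - s) ^ (α-1)) volume 0 t := by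
      apply ContinuousOn.intervalIntegrable
      rw [uIcc_of_le ht]
      exact continuousOn_const.mul ((continuousOn_const.sub continuousOn_id).rpow_const
        (fun z hz => Or.inl (ne_of_gt (hpos' z hz))))
    have hmono := intervalIntegral.integral_mono_on (μ := volume) ht (hint1.sub hint2)
      (hLinvInt t ht hts)
      (fun z hz => hinv_lb z hz.1 (lt_of_le_of_lt hz.2 hts))
    have hcalc : (∫ s in (0:ℝ)..t, ((2*astar*(tstar - s))⁻¹ - K₃ * (tstar - s) ^ (α-1)))
        = (2*astar)⁻¹ * (Real.log tstar - Real.log (tstar - t))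
          - K₃ * ((tstar ^ α - (tstar - t) ^ α) / α) := by
      rw [intervalIntegral.integral_sub hint1 hint2]
      have e1 : (∫ s in (0:ℝ)..t, (2*astar*(tstar - s))⁻¹)
          = (2*astar)⁻¹ * (Real.log tstar - Real.log (tstar - t)) := by
        have : ∀ s : ℝ, (2*astar*(tstar - s))⁻¹ = (2*astar)⁻¹ * (tstar - s)⁻¹ := by
          intro s; rw [mul_inv]
        simp_rw [this]
        rw [intervalIntegral.integral_const_mul, hloginv t ht hts]
      have e2 : (∫ s in (0:ℝ)..t, K₃ * (tstar - s) ^ (α-1))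
          = K₃ * ((tstar ^ α - (tstar - t) ^ α) / α) := by
        rw [intervalIntegral.integral_const_mul,
          hrpow t (α-1) ht hts (by linarith : (-1:ℝ) < α - 1)]
        norm_num
      rw [e1, e2]
    rw [hcalc] at hmono
    have h9 : 0 ≤ (tstar - t) ^ α := Real.rpow_nonneg (by linarith) _
    have h10 : K₃ * ((tstar ^ α - (tstar - t) ^ α) / α) ≤ K₃ * (tstar ^ α / α) := by
      apply mul_le_mul_of_nonneg_left _ hK3nn
      exact (div_le_div_iff_of_pos_right hαpos).mpr (by linarith)
    linarith
  -- conclusion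
  refine ⟨Real.exp (c * (K₃ * (tstar ^ α / α))) * tstar ^ (-(c / (2*astar))), ?_⟩
  intro t ht
  obtain ⟨ht0, hts⟩ := ht
  rw [htau t ht0 hts]
  have h1 := hτ_lb2 t ht0 hts
  have h2astar : (0:ℝ) < 2*astar := by linarith
  have hposd : (0:ℝ) < tstar - t := by linarith
  set T := ∫ s in (0:ℝ)..t, (lam₀ ^ 2 - 2 * ∫ u in (0:ℝ)..s, atil u)⁻¹ with hTdef
  set X := Real.log tstar with hXdef
  set Y := Real.log (tstar - t) with hYdef
  have key : (c/(2*astar)) * (X - Y) - c * (K₃ * (tstar ^ α / α)) ≤ c * T := by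
    have h3 := mul_le_mul_of_nonneg_left h1 hc.le
    have e1 : c * ((2*astar)⁻¹ * (X - Y) - K₃ * (tstar ^ α / α))
        = (c/(2*astar)) * (X - Y) - c * (K₃ * (tstar ^ α / α)) := by
      field_simp
    rw [e1] at h3
    exact h3
  have h2 : -c * T ≤ c * (K₃ * (tstar ^ α / α)) + (X * (-(c/(2*astar))) + Y * (c/(2*astar))) := by
    nlinarith [key]
  calc Real.exp (-c * T)
      ≤ Real.exp (c * (K₃ * (tstar ^ α / α)) + (X * (-(c/(2*astar))) + Y * (c/(2*astar)))) :=
        Real.exp_le_exp.mpr h2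
    _ = Real.exp (c * (K₃ * (tstar ^ α / α))) * tstar ^ (-(c/(2*astar)))
          * (tstar - t) ^ (c/(2*astar)) := by
        rw [Real.exp_add, Real.exp_add, hXdef, hYdef,
          ← Real.rpow_def_of_pos htstar, ← Real.rpow_def_of_pos hposd]
        ring
end

section
/- Let n ≥ 1, λ₀ > 0, and let ã : [0, ∞) → [n − 1/2, n + 1/2] be continuous; let t_* be the unique positive time with λ₀² = 2∫₀^{t_*} ã(s) ds, and set λ(t) := (λ₀² − 2∫₀^t ã(s) ds)^{1/2} and τ(t) := ∫₀^t λ(s)^{-2} ds for t ∈ [0, t_*). Assume there are constants c > 0, C ≥ 0 and a_* ∈ [n − 1/2, n + 1/2] with |ã(t) − a_*| ≤ C e^{−c τ(t)} for all t ∈ [0, t_*). Then there exists a constant C₁ such that |λ(t) − √(2a_*(t_* − t))| ≤ C₁ (t_* − t)^{1/2 + c/(2a_*)} for all t ∈ [0, t_*). In particular λ(t)²/(t_* − t) → 2a_* as t → t_*⁻. -/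
open MeasureTheory Set Filter
set_option maxHeartbeats 1000000

private theorem sqrt_diff_le {x y : ℝ} (hx : 0 ≤ x) (hy : 0 < y) :
    |Real.sqrt x - Real.sqrt y| ≤ |x - y| / Real.sqrt y := by
  have hsy : 0 < Real.sqrt y := Real.sqrt_pos.2 hy
  have hsum : 0 < Real.sqrt x + Real.sqrt y := by positivity
  have key : |Real.sqrt x - Real.sqrt y| * (Real.sqrt x + Real.sqrt y) = |x - y| := by
    rw [← abs_of_pos hsum, ← abs_mul]
    congr 1
    have h1 := Real.sq_sqrt hx
    have h2 := Real.sq_sqrt hy.le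
    ring_nf
    nlinarith [h1, h2]
  have : |Real.sqrt x - Real.sqrt y| = |x - y| / (Real.sqrt x + Real.sqrt y) := by
    field_simp [hsum.ne'] at key ⊢
    linarith [key]
  rw [this]
  exact div_le_div_of_nonneg_left (abs_nonneg _) hsy (by linarith [Real.sqrt_nonneg x])

/-- the asymptotic law `λ(t) = √(2a_*(t_* − t)) + O((t_*−t)^{1/2+c/(2a_*)})`
for the collapsing scaling parameter, where `λ(t) = (λ₀² − 2∫₀^t ã)^{1/2}`,
`τ(t) = ∫₀^t λ(s)^{-2} ds` and `|ã(t) − a_*| ≤ C e^{−c τ(t)}` on `[0, t_*)`.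
In particular `λ(t)²/(t_* − t) → 2a_*` as `t → t_*⁻`. -/
theorem scaling_parameter_asymptotics (n : ℕ) (hn : 1 ≤ n) (lam₀ : ℝ) (hlam₀ : 0 < lam₀)
    (atil : ℝ → ℝ) (hcont : ContinuousOn atil (Ici 0))
    (hrange : ∀ t ∈ Ici (0 : ℝ), atil t ∈ Icc ((n : ℝ) - 1 / 2) ((n : ℝ) + 1 / 2))
    (tstar : ℝ) (htstar : 0 < tstar)
    (hcollapse : lam₀ ^ 2 = 2 * ∫ s in (0 : ℝ)..tstar, atil s)
    (huniq : ∀ t' : ℝ, 0 < t' → lam₀ ^ 2 = 2 * ∫ s in (0 : ℝ)..t', atil s → t' = tstar)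
    (c C astar : ℝ) (hc : 0 < c) (hC : 0 ≤ C)
    (hastar : astar ∈ Icc ((n : ℝ) - 1 / 2) ((n : ℝ) + 1 / 2))
    (hdecay : ∀ t ∈ Ico (0 : ℝ) tstar,
      |atil t - astar| ≤
        C * Real.exp (-c * ∫ s in (0 : ℝ)..t,
          (Real.sqrt (lam₀ ^ 2 - 2 * ∫ u in (0 : ℝ)..s, atil u) ^ 2)⁻¹)) :
    (∃ C₁ : ℝ, ∀ t ∈ Ico (0 : ℝ) tstar,
      |Real.sqrt (lam₀ ^ 2 - 2 * ∫ s in (0 : ℝ)..t, atil s) -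
          Real.sqrt (2 * astar * (tstar - t))| ≤
        C₁ * (tstar - t) ^ (1 / 2 + c / (2 * astar))) ∧
    Tendsto
      (fun t => Real.sqrt (lam₀ ^ 2 - 2 * ∫ s in (0 : ℝ)..t, atil s) ^ 2 / (tstar - t))
      (nhdsWithin tstar (Iio tstar)) (nhds (2 * astar)) := by
  -- Basic positivity
  have hn1 : (1 : ℝ) ≤ (n : ℝ) := by exact_mod_cast hn
  have hm1 : (1 : ℝ)/2 ≤ (n : ℝ) - 1/2 := by linarith
  have hapos : 0 < astar := lt_of_lt_of_le (by linarith) hastar.1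
  have ha2 : 0 < 2 * astar := by linarith
  set α : ℝ := c / (2 * astar) with hαdef
  have hα : 0 < α := div_pos hc ha2
  clear_value α
  -- abbreviation for F
  set F : ℝ → ℝ := fun t => lam₀ ^ 2 - 2 * ∫ s in (0 : ℝ)..t, atil s with hFdef
  have fold : ∀ x : ℝ, (lam₀ ^ 2 - 2 * ∫ s in (0 : ℝ)..x, atil s) = F x := fun _ => rfl
  -- integrability of atil
  clear_value F
  have hInt : ∀ a b : ℝ, 0 ≤ a → 0 ≤ b → IntervalIntegrable atil volume a b := by
    intro a b ha hb
    refine (hcont.mono ?_).intervalIntegrable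
    intro x hx
    exact le_trans (le_min ha hb) hx.1
  -- F as tail integral
  have hFt : ∀ t ∈ Icc (0:ℝ) tstar, F t = 2 * ∫ s in t..tstar, atil s := by
    intro t ht
    have hadd := intervalIntegral.integral_add_adjacent_intervals
      (hInt 0 t le_rfl ht.1) (hInt t tstar ht.1 htstar.le)
    rw [← fold t]
    linarith [hadd, hcollapse]
  -- upper and lower bounds on F
  have hFlb : ∀ t ∈ Icc (0:ℝ) tstar, 2 * ((n:ℝ) - 1/2) * (tstar - t) ≤ F t := by
    intro t ht
    rw [hFt t ht]
    have hmono := intervalIntegral.integral_mono_on (μ := volume) ht.2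
      intervalIntegrable_const (hInt t tstar ht.1 htstar.le)
      (fun x hx => (hrange x (le_trans ht.1 hx.1)).1)
    rw [intervalIntegral.integral_const, smul_eq_mul] at hmono
    linarith
  have hFub : ∀ t ∈ Icc (0:ℝ) tstar, F t ≤ 2 * ((n:ℝ) + 1/2) * (tstar - t) := by
    intro t ht
    rw [hFt t ht]
    have hmono := intervalIntegral.integral_mono_on (μ := volume) ht.2
      (hInt t tstar ht.1 htstar.le) intervalIntegrable_const
      (fun x hx => (hrange x (le_trans ht.1 hx.1)).2)
    rw [intervalIntegral.integral_const, smul_eq_mul] at hmono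
    linarith
  have hFpos : ∀ t ∈ Ico (0:ℝ) tstar, 0 < F t := by
    intro t ht
    have := hFlb t ⟨ht.1, ht.2.le⟩
    nlinarith [mul_pos (show (0:ℝ) < (n:ℝ) - 1/2 by linarith) (show 0 < tstar - t by linarith [ht.2])]
  have hF0 : ∀ t ∈ Icc (0:ℝ) tstar, 0 ≤ F t := by
    intro t ht
    have := hFlb t ht
    nlinarith [mul_nonneg (show (0:ℝ) ≤ (n:ℝ) - 1/2 by linarith) (show 0 ≤ tstar - t by linarith [ht.2])]
  -- continuity of F
  have hFcont : ContinuousOn F (Icc 0 tstar) := by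
    rw [hFdef]
    refine continuousOn_const.sub (continuousOn_const.mul ?_)
    have hio : IntegrableOn atil (uIcc 0 tstar) volume := by
      rw [uIcc_of_le htstar.le]
      exact (hcont.mono (Icc_subset_Ici_self)).integrableOn_Icc
    have := intervalIntegral.continuousOn_primitive_interval (μ := volume) hio
    rwa [uIcc_of_le htstar.le] at this
  -- integrability of 1/F on [0,t]
  have hτint : ∀ t ∈ Ico (0:ℝ) tstar, IntervalIntegrable (fun s => (F s)⁻¹) volume 0 t := by
    intro t ht
    have hsub : Icc (0:ℝ) t ⊆ Icc 0 tstar := Icc_subset_Icc le_rfl ht.2.le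
    refine ContinuousOn.intervalIntegrable ?_
    rw [uIcc_of_le ht.1]
    exact ((hFcont.mono hsub).inv₀ (fun s hs =>
      (hFpos s ⟨hs.1, lt_of_le_of_lt hs.2 ht.2⟩).ne'))
  -- generic log-integral computation
  have hlogint : ∀ b : ℝ, 0 < b → ∀ t ∈ Ico (0:ℝ) tstar,
      (∫ s in (0:ℝ)..t, (b * (tstar - s))⁻¹)
        = b⁻¹ * (Real.log tstar - Real.log (tstar - t)) := by
    intro b hb t ht
    have hts : 0 < tstar - t := by linarith [ht.2]
    simp_rw [mul_inv]
    rw [intervalIntegral.integral_const_mul]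
    congr 1
    rw [intervalIntegral.integral_comp_sub_left (fun x => x⁻¹) tstar, sub_zero]
    rw [integral_inv (by
      rw [uIcc_of_le (by linarith [ht.1] : tstar - t ≤ tstar)]
      intro hmem
      exact absurd hmem.1 (not_le.2 (by linarith)))]
    rw [Real.log_div (ne_of_gt htstar) (ne_of_gt hts)]
  -- rewriting the decay hypothesis
  have hdecay' : ∀ t ∈ Ico (0:ℝ) tstar,
      |atil t - astar| ≤ C * Real.exp (-c * ∫ s in (0:ℝ)..t, (F s)⁻¹) := by
    intro t ht
    have h := hdecay t ht
    simp only [fold] at h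
    have heq : (∫ s in (0:ℝ)..t, (Real.sqrt (F s) ^ 2)⁻¹) = ∫ s in (0:ℝ)..t, (F s)⁻¹ := by
      refine intervalIntegral.integral_congr (fun s hs => ?_)
      rw [uIcc_of_le ht.1] at hs
      rw [Real.sq_sqrt (hF0 s ⟨hs.1, le_trans hs.2 ht.2.le⟩)]
    rwa [heq] at h
  -- generic: lower bound on τ yields power decay of atil
  have key_decay : ∀ θ K : ℝ, 0 < θ →
      (∀ t ∈ Ico (0:ℝ) tstar,
        θ * (Real.log tstar - Real.log (tstar - t)) - K ≤ ∫ s in (0:ℝ)..t, (F s)⁻¹) →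
      ∀ t ∈ Ico (0:ℝ) tstar,
        |atil t - astar| ≤ (C * Real.exp (c * K) * tstar ^ (-(c * θ))) * (tstar - t) ^ (c * θ) := by
    intro θ K hθ hbound t ht
    have hts : 0 < tstar - t := by linarith [ht.2]
    have hτ := hbound t ht
    calc |atil t - astar| ≤ C * Real.exp (-c * ∫ s in (0:ℝ)..t, (F s)⁻¹) := hdecay' t ht
      _ ≤ C * Real.exp (-c * (θ * (Real.log tstar - Real.log (tstar - t)) - K)) := by
          refine mul_le_mul_of_nonneg_left (Real.exp_le_exp.2 ?_) hC
          nlinarith [mul_le_mul_of_nonneg_left hτ hc.le]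
      _ = (C * Real.exp (c * K) * tstar ^ (-(c * θ))) * (tstar - t) ^ (c * θ) := by
          have hexp : -c * (θ * (Real.log tstar - Real.log (tstar - t)) - K)
              = c * K + (Real.log tstar * (-(c * θ)) + Real.log (tstar - t) * (c * θ)) := by ring
          rw [hexp, Real.exp_add, Real.exp_add,
            Real.rpow_def_of_pos htstar, Real.rpow_def_of_pos hts]
          ring
  -- generic: power decay of atil yields estimate on F
  have key_F : ∀ M γ : ℝ, 0 ≤ M → 0 < γ →
      (∀ t ∈ Ico (0:ℝ) tstar, |atil t - astar| ≤ M * (tstar - t) ^ γ) →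
      ∀ t ∈ Ico (0:ℝ) tstar,
        |F t - 2 * astar * (tstar - t)| ≤ (2 * M / (1 + γ)) * (tstar - t) ^ (1 + γ) := by
    intro M γ hM hγ hb t ht
    have hts : 0 < tstar - t := by linarith [ht.2]
    have hint1 : IntervalIntegrable (fun s => atil s - astar) volume t tstar :=
      (hInt t tstar ht.1 htstar.le).sub intervalIntegrable_const
    have h1 : F t - 2 * astar * (tstar - t) = 2 * ∫ s in t..tstar, (atil s - astar) := by
      rw [intervalIntegral.integral_sub (hInt t tstar ht.1 htstar.le) intervalIntegrable_const,
        intervalIntegral.integral_const, smul_eq_mul, hFt t ⟨ht.1, ht.2.le⟩]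
      ring
    have hrpc : Continuous (fun s : ℝ => (tstar - s) ^ γ) :=
      (continuous_iff_continuousAt.2
        (fun x => Real.continuousAt_rpow_const x γ (Or.inr hγ.le))).comp
        (continuous_const.sub continuous_id)
    have habs : |∫ s in t..tstar, (atil s - astar)| ≤ ∫ s in t..tstar, |atil s - astar| :=
      intervalIntegral.abs_integral_le_integral_abs ht.2.le
    have hmono2 : (∫ s in t..tstar, |atil s - astar|) ≤ ∫ s in t..tstar, M * (tstar - s) ^ γ := by
      refine intervalIntegral.integral_mono_ae_restrict ht.2.le hint1.abs
        ((continuous_const.mul hrpc).intervalIntegrable _ _) ?_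
      have hne : ∀ᵐ x ∂(volume.restrict (Icc t tstar)), x ≠ tstar := by
        refine ae_restrict_of_ae ?_
        have hset : {x : ℝ | ¬ x ≠ tstar} = {tstar} := by ext x; simp
        rw [ae_iff, hset]
        exact Real.volume_singleton
      have hmem : ∀ᵐ x ∂(volume.restrict (Icc t tstar)), x ∈ Icc t tstar :=
        ae_restrict_mem measurableSet_Icc
      filter_upwards [hne, hmem] with x hx1 hx2
      exact hb x ⟨le_trans ht.1 hx2.1, lt_of_le_of_ne hx2.2 hx1⟩
    have hcomp : (∫ s in t..tstar, M * (tstar - s) ^ γ)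
        = M * ((tstar - t) ^ (γ + 1) / (γ + 1)) := by
      rw [intervalIntegral.integral_const_mul]
      congr 1
      rw [intervalIntegral.integral_comp_sub_left (fun x => x ^ γ) tstar, sub_self,
        integral_rpow (Or.inl (by linarith : (-1:ℝ) < γ)),
        Real.zero_rpow (by positivity : γ + 1 ≠ 0)]
      ring
    have hfinal : |∫ s in t..tstar, (atil s - astar)| ≤ M * ((tstar - t) ^ (γ + 1) / (γ + 1)) := by
      rw [← hcomp]; exact le_trans habs hmono2
    rw [h1, abs_mul, abs_two, add_comm 1 γ]
    have hγ1 : 0 < γ + 1 := by linarith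
    rw [← mul_div_assoc] at hfinal
    have hfinal2 := (le_div_iff₀ hγ1).1 hfinal
    rw [div_mul_eq_mul_div, le_div_iff₀ hγ1]
    nlinarith [hfinal2]
  -- crude τ lower bound
  have hτ₁ : ∀ t ∈ Ico (0:ℝ) tstar,
      (2 * ((n:ℝ) + 1/2))⁻¹ * (Real.log tstar - Real.log (tstar - t)) - 0
        ≤ ∫ s in (0:ℝ)..t, (F s)⁻¹ := by
    intro t ht
    have hts : 0 < tstar - t := by linarith [ht.2]
    have hm2 : (0:ℝ) < 2 * ((n:ℝ) + 1/2) := by positivity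
    have hpt : ∀ s ∈ Icc (0:ℝ) t, (2 * ((n:ℝ) + 1/2) * (tstar - s))⁻¹ ≤ (F s)⁻¹ := by
      intro s hs
      have hs' : s ∈ Ico (0:ℝ) tstar := ⟨hs.1, lt_of_le_of_lt hs.2 ht.2⟩
      exact inv_anti₀ (hFpos s hs') (hFub s ⟨hs.1, hs'.2.le⟩)
    have hcont2 : ContinuousOn (fun s => (2 * ((n:ℝ) + 1/2) * (tstar - s))⁻¹) (uIcc 0 t) := by
      rw [uIcc_of_le ht.1]
      refine ContinuousOn.inv₀
        ((continuous_const.mul (continuous_const.sub continuous_id)).continuousOn) ?_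
      intro s hs
      have : 0 < tstar - s := by
        rcases hs with ⟨_, h2⟩
        try simp only [id] at *
        linarith [ht.2]
      positivity
    have hmono := intervalIntegral.integral_mono_on ht.1 hcont2.intervalIntegrable
      (hτint t ht) hpt
    rw [← hlogint _ hm2 t ht]
    linarith [hmono]
  -- crude decay
  set γ₀ : ℝ := c * (2 * ((n:ℝ) + 1/2))⁻¹ with hγ₀def
  have hγ₀ : 0 < γ₀ := by positivity
  set M₀ : ℝ := C * Real.exp (c * 0) * tstar ^ (-(c * (2 * ((n:ℝ) + 1/2))⁻¹)) with hM₀def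
  have hM₀ : 0 ≤ M₀ := by positivity
  have hdec₀ : ∀ t ∈ Ico (0:ℝ) tstar, |atil t - astar| ≤ M₀ * (tstar - t) ^ γ₀ :=
    key_decay _ 0 (by positivity) hτ₁
  -- crude F estimate
  set C₃ : ℝ := 2 * M₀ / (1 + γ₀) with hC₃def
  have hC₃ : 0 ≤ C₃ := by positivity
  have hF₀ : ∀ t ∈ Ico (0:ℝ) tstar,
      |F t - 2 * astar * (tstar - t)| ≤ C₃ * (tstar - t) ^ (1 + γ₀) :=
    key_F M₀ γ₀ hM₀ hγ₀ hdec₀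
  clear_value γ₀ M₀ C₃
  -- refined τ lower bound
  set K₀ : ℝ := C₃ / (2 * astar * (2 * ((n:ℝ) - 1/2))) with hK₀def
  have hK₀ : 0 ≤ K₀ := by positivity
  set K₂ : ℝ := K₀ * tstar ^ γ₀ / γ₀ with hK₂def
  clear_value K₀ K₂
  have hτ₂ : ∀ t ∈ Ico (0:ℝ) tstar,
      (2 * astar)⁻¹ * (Real.log tstar - Real.log (tstar - t)) - K₂
        ≤ ∫ s in (0:ℝ)..t, (F s)⁻¹ := by
    intro t ht
    have hts : 0 < tstar - t := by linarith [ht.2]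
    have hm1pos : (0:ℝ) < 2 * ((n:ℝ) - 1/2) := by linarith
    -- pointwise lower bound for (F s)⁻¹
    have hpt : ∀ s ∈ Icc (0:ℝ) t,
        (2 * astar * (tstar - s))⁻¹ - K₀ * (tstar - s) ^ (γ₀ - 1) ≤ (F s)⁻¹ := by
      intro s hs
      have hs' : s ∈ Ico (0:ℝ) tstar := ⟨hs.1, lt_of_le_of_lt hs.2 ht.2⟩
      have hy : 0 < tstar - s := by linarith [hs'.2]
      have hFs : 0 < F s := hFpos s hs'
      have hlbs := hFlb s ⟨hs.1, hs'.2.le⟩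
      have hcrude := hF₀ s hs'
      have h2ay : 0 < 2 * astar * (tstar - s) := by positivity
      have hid := inv_sub_inv (ne_of_gt hFs) (ne_of_gt h2ay)
      have hnum : -(C₃ * (tstar - s) ^ (1 + γ₀)) ≤ 2 * astar * (tstar - s) - F s := by
        have := (abs_le.1 hcrude).2
        linarith
      have hD : 0 < F s * (2 * astar * (tstar - s)) := by positivity
      have hD0 : 0 < (2 * ((n:ℝ) - 1/2) * (tstar - s)) * (2 * astar * (tstar - s)) := by
        positivity
      have hDle : (2 * ((n:ℝ) - 1/2) * (tstar - s)) * (2 * astar * (tstar - s))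
          ≤ F s * (2 * astar * (tstar - s)) :=
        mul_le_mul_of_nonneg_right hlbs h2ay.le
      have step1 : -(C₃ * (tstar - s) ^ (1 + γ₀)) / (F s * (2 * astar * (tstar - s)))
          ≤ (2 * astar * (tstar - s) - F s) / (F s * (2 * astar * (tstar - s))) :=
        (div_le_div_iff_of_pos_right hD).2 hnum
      have step2 : (C₃ * (tstar - s) ^ (1 + γ₀)) / (F s * (2 * astar * (tstar - s)))
          ≤ (C₃ * (tstar - s) ^ (1 + γ₀))
            / ((2 * ((n:ℝ) - 1/2) * (tstar - s)) * (2 * astar * (tstar - s))) :=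
        div_le_div_of_nonneg_left (by positivity) hD0 hDle
      have step3 : (C₃ * (tstar - s) ^ (1 + γ₀))
          / ((2 * ((n:ℝ) - 1/2) * (tstar - s)) * (2 * astar * (tstar - s)))
          = K₀ * (tstar - s) ^ (γ₀ - 1) := by
        rw [hK₀def]
        have hrw : (1 + γ₀) = (γ₀ - 1) + 1 + 1 := by ring
        rw [hrw, Real.rpow_add hy, Real.rpow_add hy, Real.rpow_one]
        rw [div_mul_eq_mul_div, div_eq_div_iff (ne_of_gt hD0)
          (by positivity : (0:ℝ) < 2 * astar * (2 * ((n:ℝ) - 1/2))).ne']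
        ring
      have hneg : -(K₀ * (tstar - s) ^ (γ₀ - 1))
          ≤ (2 * astar * (tstar - s) - F s) / (F s * (2 * astar * (tstar - s))) := by
        rw [← step3]
        rw [neg_div] at step1
        linarith [step1, step2]
      linarith [hid, hneg]
    -- integrability of the lower bound pieces
    have hccA : ContinuousOn (fun s => (2 * astar * (tstar - s))⁻¹) (uIcc 0 t) := by
      rw [uIcc_of_le ht.1]
      refine ContinuousOn.inv₀
        ((continuous_const.mul (continuous_const.sub continuous_id)).continuousOn) ?_
      intro s hs
      have : 0 < tstar - s := by
        rcases hs with ⟨_, h2⟩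
        try simp only [id] at *
        linarith [ht.2]
      positivity
    have hccB : ContinuousOn (fun s => K₀ * (tstar - s) ^ (γ₀ - 1)) (uIcc 0 t) := by
      rw [uIcc_of_le ht.1]
      refine continuousOn_const.mul (ContinuousOn.rpow_const
        ((continuous_const.sub continuous_id).continuousOn) ?_)
      intro s hs
      left
      rcases hs with ⟨_, h2⟩
      try simp only [id] at *
      have : 0 < tstar - s := by linarith [ht.2]
      exact ne_of_gt this
    have hintA : IntervalIntegrable (fun s => (2 * astar * (tstar - s))⁻¹) volume 0 t :=
      hccA.intervalIntegrable
    have hintB : IntervalIntegrable (fun s => K₀ * (tstar - s) ^ (γ₀ - 1)) volume 0 t :=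
      hccB.intervalIntegrable
    have hmono := intervalIntegral.integral_mono_on ht.1 (hintA.sub hintB)
      (hτint t ht) hpt
    rw [intervalIntegral.integral_sub hintA hintB,
      hlogint (2 * astar) ha2 t ht,
      intervalIntegral.integral_const_mul] at hmono
    have hcompB : (∫ s in (0:ℝ)..t, (tstar - s) ^ (γ₀ - 1))
        = (tstar ^ γ₀ - (tstar - t) ^ γ₀) / γ₀ := by
      rw [intervalIntegral.integral_comp_sub_left (fun x => x ^ (γ₀ - 1)) tstar, sub_zero,
        integral_rpow (Or.inl (by linarith [hγ₀] : (-1:ℝ) < γ₀ - 1))]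
      rw [sub_add_cancel]
    rw [hcompB] at hmono
    have hK₂le : K₀ * ((tstar ^ γ₀ - (tstar - t) ^ γ₀) / γ₀) ≤ K₂ := by
      rw [hK₂def, ← mul_div_assoc]
      have hX : 0 ≤ (tstar - t) ^ γ₀ := Real.rpow_nonneg hts.le _
      gcongr
      linarith
    linarith [hmono, hK₂le]
  -- refined decay
  set M₁ : ℝ := C * Real.exp (c * K₂) * tstar ^ (-(c * (2 * astar)⁻¹)) with hM₁def
  have hdec₁ : ∀ t ∈ Ico (0:ℝ) tstar, |atil t - astar| ≤ M₁ * (tstar - t) ^ α := by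
    have := key_decay (2 * astar)⁻¹ K₂ (by positivity) hτ₂
    intro t ht
    have h := this t ht
    rw [show c * (2 * astar)⁻¹ = α by rw [hαdef]; ring] at h
    rw [hM₁def, show -(c * (2 * astar)⁻¹) = -α by rw [hαdef]; ring]
    exact h
  have hM₁ : 0 ≤ M₁ := by positivity
  clear_value M₁
  -- refined F estimate
  set C₅ : ℝ := 2 * M₁ / (1 + α) with hC₅def
  have hC₅ : 0 ≤ C₅ := by positivity
  have hF₁ : ∀ t ∈ Ico (0:ℝ) tstar,
      |F t - 2 * astar * (tstar - t)| ≤ C₅ * (tstar - t) ^ (1 + α) :=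
    key_F M₁ α hM₁ hα hdec₁
  clear_value C₅
  constructor
  · -- main estimate
    refine ⟨C₅ / Real.sqrt (2 * astar), ?_⟩
    intro t ht
    rw [fold t]
    have hts : 0 < tstar - t := by linarith [ht.2]
    have hF0t : 0 ≤ F t := hF0 t ⟨ht.1, ht.2.le⟩
    have hypos : 0 < 2 * astar * (tstar - t) := by positivity
    have h1 := sqrt_diff_le hF0t hypos
    have hsy : 0 < Real.sqrt (2 * astar * (tstar - t)) := Real.sqrt_pos.2 hypos
    have h2 : |F t - 2 * astar * (tstar - t)| / Real.sqrt (2 * astar * (tstar - t))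
        ≤ (C₅ * (tstar - t) ^ (1 + α)) / Real.sqrt (2 * astar * (tstar - t)) := by
      gcongr
      exact hF₁ t ht
    have h3 : (C₅ * (tstar - t) ^ (1 + α)) / Real.sqrt (2 * astar * (tstar - t))
        = C₅ / Real.sqrt (2 * astar) * (tstar - t) ^ (1/2 + α) := by
      rw [Real.sqrt_mul (by linarith : (0:ℝ) ≤ 2 * astar), Real.sqrt_eq_rpow (tstar - t),
        show (1:ℝ) + α = (1/2 + α) + 1/2 by ring, Real.rpow_add hts]
      have hs2 : (0:ℝ) < Real.sqrt (2 * astar) := Real.sqrt_pos.2 ha2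
      have hr2 : (0:ℝ) < (tstar - t) ^ ((1:ℝ)/2) := Real.rpow_pos_of_pos hts _
      rw [div_mul_eq_mul_div, div_eq_div_iff (by positivity) hs2.ne']
      ring
    linarith [h1, h2, h3]
  · -- the limit
    have hev : ∀ᶠ t in nhdsWithin tstar (Iio tstar), t ∈ Ico (0:ℝ) tstar := by
      have h1 : ∀ᶠ t in nhdsWithin tstar (Iio tstar), t ∈ Iio tstar :=
        eventually_mem_nhdsWithin
      have h2 : ∀ᶠ t in nhdsWithin tstar (Iio tstar), 0 < t :=
        (eventually_gt_nhds htstar).filter_mono nhdsWithin_le_nhds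
      filter_upwards [h1, h2] with t ht1 ht2
      exact ⟨ht2.le, ht1⟩
    have hbound : ∀ᶠ t in nhdsWithin tstar (Iio tstar),
        |F t / (tstar - t) - 2 * astar| ≤ C₅ * (tstar - t) ^ α := by
      filter_upwards [hev] with t ht
      have hts : 0 < tstar - t := by linarith [ht.2]
      have h := hF₁ t ht
      rw [show F t / (tstar - t) - 2 * astar = (F t - 2 * astar * (tstar - t)) / (tstar - t) by
        field_simp, abs_div, abs_of_pos hts, div_le_iff₀ hts]
      calc |F t - 2 * astar * (tstar - t)| ≤ C₅ * (tstar - t) ^ (1 + α) := h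
        _ = C₅ * (tstar - t) ^ α * (tstar - t) := by
            rw [Real.rpow_add hts, Real.rpow_one]; ring
    have hg0 : Tendsto (fun t => C₅ * (tstar - t) ^ α)
        (nhdsWithin tstar (Iio tstar)) (nhds 0) := by
      have h1 : Tendsto (fun t : ℝ => tstar - t) (nhdsWithin tstar (Iio tstar)) (nhds 0) := by
        have h0 := (continuous_const.sub (continuous_id (X := ℝ)) (f := fun _ => tstar)).tendsto tstar
        simp only [Pi.sub_apply, id, sub_self] at h0
        exact h0.mono_left nhdsWithin_le_nhds
      have h2 : ContinuousAt (fun x : ℝ => x ^ α) 0 :=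
        Real.continuousAt_rpow_const 0 α (Or.inr hα.le)
      have h3 := h2.tendsto.comp h1
      rw [Real.zero_rpow (ne_of_gt hα)] at h3
      have h4 := h3.const_mul C₅
      simpa using h4
    have htend0 : Tendsto (fun t => F t / (tstar - t) - 2 * astar)
        (nhdsWithin tstar (Iio tstar)) (nhds 0) :=
      squeeze_zero_norm' (hbound.mono fun t h => by rwa [Real.norm_eq_abs]) hg0
    have htend : Tendsto (fun t => F t / (tstar - t))
        (nhdsWithin tstar (Iio tstar)) (nhds (2 * astar)) :=
      tendsto_sub_nhds_zero_iff.1 htend0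
    refine Tendsto.congr' ?_ htend
    filter_upwards [hev] with t ht
    rw [fold t, Real.sq_sqrt (hF0 t ⟨ht.1, ht.2.le⟩)]
end

section
/- Let n ≥ 1, R > 0, ω ∈ S^n, and z ∈ ℝ^{n+1} with |z| ≤ R/2. With ρ(R, z) := z·ω + √(R² − |z|² + (z·ω)²), the derivative formulas ∂_R ρ = R/(ρ − z·ω) and ∂_{z_j} ρ = (ρ ω_j − z_j)/(ρ − z·ω) satisfy the estimates |∂_R ρ − 1| ≤ 3|z|/R and |∂_{z_j} ρ − ω_j| ≤ 3|z|/R for every j = 1,…,n+1. -/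
open Metric

lemma coord_abs_le_norm {m : ℕ} (x : EuclideanSpace ℝ (Fin m)) (j : Fin m) :
    |x j| ≤ ‖x‖ := by
  have h := abs_real_inner_le_norm (EuclideanSpace.single j (1:ℝ)) x
  simpa [EuclideanSpace.inner_single_left, EuclideanSpace.norm_single] using h

/-- for `|z| ≤ R/2`, with `ρ = z·ω + √(R² − |z|² + (z·ω)²)`, the
zero-mode tangent vectors `∂_R ρ = R/(ρ − z·ω)` and
`∂_{z_j} ρ = (ρ ω_j − z_j)/(ρ − z·ω)` satisfy `|∂_R ρ − 1| ≤ 3|z|/R` and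
`|∂_{z_j} ρ − ω_j| ≤ 3|z|/R`. -/
theorem radial_graph_zero_modes_estimate (n : ℕ) (hn : 1 ≤ n) (R : ℝ) (hR : 0 < R)
    (ω : sphere (0 : EuclideanSpace ℝ (Fin (n + 1))) 1)
    (z : EuclideanSpace ℝ (Fin (n + 1))) (hz : ‖z‖ ≤ R / 2) :
    |R / (((inner ℝ z (ω : EuclideanSpace ℝ (Fin (n + 1))) : ℝ) +
          Real.sqrt (R ^ 2 - ‖z‖ ^ 2 +
            (inner ℝ z (ω : EuclideanSpace ℝ (Fin (n + 1))) : ℝ) ^ 2)) -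
        (inner ℝ z (ω : EuclideanSpace ℝ (Fin (n + 1))) : ℝ)) - 1| ≤ 3 * ‖z‖ / R ∧
    ∀ j : Fin (n + 1),
      |(((inner ℝ z (ω : EuclideanSpace ℝ (Fin (n + 1))) : ℝ) +
            Real.sqrt (R ^ 2 - ‖z‖ ^ 2 +
              (inner ℝ z (ω : EuclideanSpace ℝ (Fin (n + 1))) : ℝ) ^ 2)) *
          (ω : EuclideanSpace ℝ (Fin (n + 1))) j - z j) /
        (((inner ℝ z (ω : EuclideanSpace ℝ (Fin (n + 1))) : ℝ) +
            Real.sqrt (R ^ 2 - ‖z‖ ^ 2 +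
              (inner ℝ z (ω : EuclideanSpace ℝ (Fin (n + 1))) : ℝ) ^ 2)) -
          (inner ℝ z (ω : EuclideanSpace ℝ (Fin (n + 1))) : ℝ)) -
        (ω : EuclideanSpace ℝ (Fin (n + 1))) j| ≤ 3 * ‖z‖ / R := by
  set s : ℝ := (inner ℝ z (ω : EuclideanSpace ℝ (Fin (n + 1))) : ℝ) with hs_def
  have hω : ‖(ω : EuclideanSpace ℝ (Fin (n + 1)))‖ = 1 := by
    have := ω.2
    simpa [mem_sphere_zero_iff_norm] using this
  have hs : |s| ≤ ‖z‖ := by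
    calc |s| ≤ ‖z‖ * ‖(ω : EuclideanSpace ℝ (Fin (n + 1)))‖ := abs_real_inner_le_norm _ _
    _ = ‖z‖ := by rw [hω, mul_one]
  have hzn : (0:ℝ) ≤ ‖z‖ := norm_nonneg _
  have hs2 : s ^ 2 ≤ ‖z‖ ^ 2 := by nlinarith [abs_nonneg s, sq_abs s]
  set A : ℝ := Real.sqrt (R ^ 2 - ‖z‖ ^ 2 + s ^ 2) with hA_def
  have hargpos : 0 < R ^ 2 - ‖z‖ ^ 2 + s ^ 2 := by nlinarith [sq_nonneg s]
  have hA2 : A ^ 2 = R ^ 2 - ‖z‖ ^ 2 + s ^ 2 := Real.sq_sqrt hargpos.le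
  have hApos : 0 < A := Real.sqrt_pos.2 hargpos
  have hAR : A ≤ R := by nlinarith
  have h3A : 2 * R ≤ 3 * A := by nlinarith
  have hAne : (s + A) - s ≠ 0 := by simp [hApos.ne']
  constructor
  · have h1 : R / ((s + A) - s) - 1 = R / A - 1 := by ring_nf
    rw [h1, abs_of_nonneg (by rw [sub_nonneg, le_div_iff₀ hApos]; linarith)]
    rw [div_sub_one hApos.ne', div_le_div_iff₀ hApos hR]
    nlinarith
  · intro j
    have hwj : |(ω : EuclideanSpace ℝ (Fin (n + 1))) j| ≤ 1 := by
      simpa [hω] using coord_abs_le_norm (ω : EuclideanSpace ℝ (Fin (n + 1))) j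
    have hzj : |z j| ≤ ‖z‖ := coord_abs_le_norm z j
    set w : ℝ := (ω : EuclideanSpace ℝ (Fin (n + 1))) j
    have heq : ((s + A) * w - z j) / ((s + A) - s) - w = (s * w - z j) / A := by
      field_simp
      ring
    rw [heq, abs_div, abs_of_pos hApos, div_le_div_iff₀ hApos hR]
    have hb : |s * w - z j| ≤ 2 * ‖z‖ := by
      calc |s * w - z j| ≤ |s * w| + |z j| := abs_sub _ _
      _ = |s| * |w| + |z j| := by rw [abs_mul]
      _ ≤ ‖z‖ * 1 + ‖z‖ := by gcongr
      _ = 2 * ‖z‖ := by ring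
    nlinarith [abs_nonneg (s * w - z j)]
end
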